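/- The graph C_3 ∪ K_1 (a triangle together with one isolated vertex, having 4 vertices and 3 edges) admits a super edge-magic labeling with valence 10 and a super edge-magic labeling with valence 12, but admits no super edge-magic labeling with valence 11. -/

import Mathlib

/-- `f` is an edge-magic labeling of the graph `G` with valence `k`:
`f` is a bijection from `V(G) ∪ E(G)` onto `{1, …, p + q}` and
`f u + f v + f uv = k` for every edge `uv`. -/
def IsEdgeMagic {V : Type*} [Fintype V] (G : SimpleGraph V)
    (f : V ⊕ G.edgeSet → ℕ) (k : ℕ) : Prop :=
  Set.BijOn f Set.univ (Set.Icc 1 (Fintype.card V + G.edgeSet.ncard)) ∧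
  ∀ u v, ∀ h : G.Adj u v,
    f (Sum.inl u) + f (Sum.inl v) + f (Sum.inr ⟨s(u, v), G.mem_edgeSet.mpr h⟩) = k

/-- `f` is a super edge-magic labeling of `G` with valence `k`: an edge-magic
labeling whose vertex labels are exactly `{1, …, p}`. -/
def IsSuperEdgeMagic {V : Type*} [Fintype V] (G : SimpleGraph V)
    (f : V ⊕ G.edgeSet → ℕ) (k : ℕ) : Prop :=
  IsEdgeMagic G f k ∧ ∀ v, f (Sum.inl v) ∈ Set.Icc 1 (Fintype.card V)

/-- The graph `C₃ ∪ K₁`: a triangle on the vertices `0, 1, 2` together with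
the isolated vertex `3`. -/
def C3K1 : SimpleGraph (Fin 4) where
  Adj u v := u ≠ v ∧ u ≠ 3 ∧ v ≠ 3
  symm := ⟨fun u v ⟨h1, h2, h3⟩ => ⟨h1.symm, h3, h2⟩⟩
  loopless := ⟨fun v h => h.1 rfl⟩

instance : DecidableRel C3K1.Adj := fun u v =>
  inferInstanceAs (Decidable (u ≠ v ∧ u ≠ 3 ∧ v ≠ 3))

lemma h01 : s(0,1) ∈ C3K1.edgeSet := by decide
lemma h02 : s(0,2) ∈ C3K1.edgeSet := by decide
lemma h12 : s(1,2) ∈ C3K1.edgeSet := by decide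

lemma edge_cases (e : Sym2 (Fin 4)) (he : e ∈ C3K1.edgeSet) :
    e = s(0,1) ∨ e = s(0,2) ∨ e = s(1,2) := by revert he; revert e; decide

lemma ncard_edge : C3K1.edgeSet.ncard = 3 := by
  have : C3K1.edgeSet = {s(0,1), s(0,2), s(1,2)} := by
    ext e; constructor
    · exact fun he => by rcases edge_cases e he with h|h|h <;> simp [h]
    · intro he; rcases he with h|h|h <;> subst h <;> decide
  rw [this]
  rw [Set.ncard_insert_of_notMem (by decide), Set.ncard_insert_of_notMem (by decide),
    Set.ncard_singleton]

lemma card_eq : Fintype.card (Fin 4) + C3K1.edgeSet.ncard = 7 := by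
  simp [ncard_edge]

def eLab : Sym2 (Fin 4) → ℕ := Sym2.lift ⟨fun u v => 8 - u.val - v.val, fun a b => by simp; omega⟩

def f10 : Fin 4 ⊕ C3K1.edgeSet → ℕ :=
  Sum.elim (fun v => v.val + 1) (fun e => eLab e.1)

def f12 : Fin 4 ⊕ C3K1.edgeSet → ℕ :=
  Sum.elim (fun v => if v = 3 then 1 else v.val + 2) (fun e => eLab e.1)

lemma cases7 (x : Fin 4 ⊕ C3K1.edgeSet) :
    x = Sum.inl 0 ∨ x = Sum.inl 1 ∨ x = Sum.inl 2 ∨ x = Sum.inl 3 ∨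
    x = Sum.inr ⟨s(0,1), h01⟩ ∨ x = Sum.inr ⟨s(0,2), h02⟩ ∨ x = Sum.inr ⟨s(1,2), h12⟩ := by
  rcases x with v | ⟨e, he⟩
  · fin_cases v <;> simp
  · rcases edge_cases e he with h|h|h <;> subst h <;> simp

lemma magic10 : IsSuperEdgeMagic C3K1 f10 10 := by
  refine ⟨⟨?_, ?_⟩, ?_⟩
  · rw [card_eq]
    refine ⟨?_, ?_, ?_⟩
    · intro x _
      rcases cases7 x with h|h|h|h|h|h|h <;> subst h <;> decide
    · intro x _ y _ hxy
      rcases cases7 x with h|h|h|h|h|h|h <;> rcases cases7 y with h'|h'|h'|h'|h'|h'|h' <;>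
        subst h <;> subst h' <;> revert hxy <;> decide
    · intro y hy
      rw [Set.mem_Icc] at hy; obtain ⟨hy1, hy2⟩ := hy
      interval_cases y
      · exact ⟨Sum.inl 0, trivial, rfl⟩
      · exact ⟨Sum.inl 1, trivial, rfl⟩
      · exact ⟨Sum.inl 2, trivial, rfl⟩
      · exact ⟨Sum.inl 3, trivial, rfl⟩
      · exact ⟨Sum.inr ⟨s(1,2), h12⟩, trivial, rfl⟩
      · exact ⟨Sum.inr ⟨s(0,2), h02⟩, trivial, rfl⟩
      · exact ⟨Sum.inr ⟨s(0,1), h01⟩, trivial, rfl⟩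
  · intro u v h
    fin_cases u <;> fin_cases v <;> first | exact absurd h (by decide) | rfl
  · intro v; fin_cases v <;> decide

lemma magic12 : IsSuperEdgeMagic C3K1 f12 12 := by
  refine ⟨⟨?_, ?_⟩, ?_⟩
  · rw [card_eq]
    refine ⟨?_, ?_, ?_⟩
    · intro x _
      rcases cases7 x with h|h|h|h|h|h|h <;> subst h <;> decide
    · intro x _ y _ hxy
      rcases cases7 x with h|h|h|h|h|h|h <;> rcases cases7 y with h'|h'|h'|h'|h'|h'|h' <;>
        subst h <;> subst h' <;> revert hxy <;> decide
    · intro y hy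
      rw [Set.mem_Icc] at hy; obtain ⟨hy1, hy2⟩ := hy
      interval_cases y
      · exact ⟨Sum.inl 3, trivial, rfl⟩
      · exact ⟨Sum.inl 0, trivial, rfl⟩
      · exact ⟨Sum.inl 1, trivial, rfl⟩
      · exact ⟨Sum.inl 2, trivial, rfl⟩
      · exact ⟨Sum.inr ⟨s(1,2), h12⟩, trivial, rfl⟩
      · exact ⟨Sum.inr ⟨s(0,2), h02⟩, trivial, rfl⟩
      · exact ⟨Sum.inr ⟨s(0,1), h01⟩, trivial, rfl⟩
  · intro u v h
    fin_cases u <;> fin_cases v <;> first | exact absurd h (by decide) | rfl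
  · intro v; fin_cases v <;> decide

/-- The graph `C₃ ∪ K₁` admits a super edge-magic labeling with valence `10`
and one with valence `12`, but admits no super edge-magic labeling with
valence `11`. -/
theorem stmt_19 :
    (∃ f, IsSuperEdgeMagic C3K1 f 10) ∧ (∃ f, IsSuperEdgeMagic C3K1 f 12) ∧
    ¬ ∃ f, IsSuperEdgeMagic C3K1 f 11 := by
  refine ⟨⟨f10, magic10⟩, ⟨f12, magic12⟩, ?_⟩
  rintro ⟨f, ⟨⟨hbij, hmag⟩, hsup⟩⟩
  rw [card_eq] at hbij
  have hmaps := hbij.1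
  have hinj := hbij.2.1
  -- bounds
  have bd : ∀ x : Fin 4 ⊕ C3K1.edgeSet, 1 ≤ f x ∧ f x ≤ 7 := fun x => by
    have := hmaps (Set.mem_univ x); simpa [Set.mem_Icc] using this
  have sup : ∀ v : Fin 4, 1 ≤ f (Sum.inl v) ∧ f (Sum.inl v) ≤ 4 := fun v => by
    have := hsup v; simpa [Set.mem_Icc] using this
  have ne : ∀ x y : Fin 4 ⊕ C3K1.edgeSet, x ≠ y → f x ≠ f y := fun x y hxy hf =>
    hxy (hinj (Set.mem_univ x) (Set.mem_univ y) hf)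
  have m1 : f (Sum.inl 0) + f (Sum.inl 1) + f (Sum.inr ⟨s(0,1), h01⟩) = 11 :=
    hmag 0 1 (by decide)
  have m2 : f (Sum.inl 0) + f (Sum.inl 2) + f (Sum.inr ⟨s(0,2), h02⟩) = 11 :=
    hmag 0 2 (by decide)
  have m3 : f (Sum.inl 1) + f (Sum.inl 2) + f (Sum.inr ⟨s(1,2), h12⟩) = 11 :=
    hmag 1 2 (by decide)
  have s0 := sup 0; have s1 := sup 1; have s2 := sup 2; have s3 := sup 3
  have b1 := bd (Sum.inr ⟨s(0,1), h01⟩)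
  have b2 := bd (Sum.inr ⟨s(0,2), h02⟩)
  have b3 := bd (Sum.inr ⟨s(1,2), h12⟩)
  have n01 := ne (Sum.inl 0) (Sum.inl 1) (by decide)
  have n02 := ne (Sum.inl 0) (Sum.inl 2) (by decide)
  have n03 := ne (Sum.inl 0) (Sum.inl 3) (by decide)
  have n12 := ne (Sum.inl 1) (Sum.inl 2) (by decide)
  have n13 := ne (Sum.inl 1) (Sum.inl 3) (by decide)
  have n23 := ne (Sum.inl 2) (Sum.inl 3) (by decide)
  have ne12 := ne (Sum.inr ⟨s(0,1), h01⟩) (Sum.inr ⟨s(0,2), h02⟩) (by decide)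
  have ne13 := ne (Sum.inr ⟨s(0,1), h01⟩) (Sum.inr ⟨s(1,2), h12⟩) (by decide)
  have ne23 := ne (Sum.inr ⟨s(0,2), h02⟩) (Sum.inr ⟨s(1,2), h12⟩) (by decide)
  have nv : ∀ (v : Fin 4) (e : C3K1.edgeSet), f (Sum.inl v) ≠ f (Sum.inr e) :=
    fun v e => ne _ _ (by simp)
  have nv01 := nv 0 ⟨s(0,1), h01⟩; have nv02 := nv 0 ⟨s(0,2), h02⟩
  have nv03 := nv 0 ⟨s(1,2), h12⟩
  have nv11 := nv 1 ⟨s(0,1), h01⟩; have nv12 := nv 1 ⟨s(0,2), h02⟩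
  have nv13 := nv 1 ⟨s(1,2), h12⟩
  have nv21 := nv 2 ⟨s(0,1), h01⟩; have nv22 := nv 2 ⟨s(0,2), h02⟩
  have nv23 := nv 2 ⟨s(1,2), h12⟩
  have nv31 := nv 3 ⟨s(0,1), h01⟩; have nv32 := nv 3 ⟨s(0,2), h02⟩
  have nv33 := nv 3 ⟨s(1,2), h12⟩
  omega
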